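/- arXiv:2512.00176 — 6 statements merged into one kernel-verified Lean document; each statement's English description precedes it below -/
import Mathlib

section
/- Let G be a directed graph with edge capacities c, root r, terminal set T, and parameter λ > 0. In the (λ,T)-flow network (G extended with a super-sink t* and arcs (t,t*) of capacity λ for each t ∈ T), let (A, B ∪ {t*}) be a minimum (r,t*)-cut with r ∈ A. Then for every terminal t ∈ T ∩ A, the (r,t)-edge-connectivity in G is at least λ. -/
open Classical Finset
noncomputable section

variable {V : Type*} [Fintype V] [DecidableEq V]

/-- The set of arcs of `E` entering the vertex set `X`. -/
def inCut (E : Finset (V × V)) (X : Finset V) : Finset (V × V) :=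
  E.filter (fun e => e.1 ∉ X ∧ e.2 ∈ X)

/-- The capacity of the cut of arcs entering `X`. -/
def cutCap (E : Finset (V × V)) (c : V × V → ℝ) (X : Finset V) : ℝ :=
  ∑ e ∈ inCut E X, c e

/-- The capacity of the `(r,t*)`-cut `(V \ B, B ∪ {t*})` in the `(λ,T)`-flow network:
arcs of `G` from `V \ B` into `B`, plus the auxiliary arcs `(t,t*)` of capacity `lam`
for each terminal `t ∈ T \ B`. -/
def netCutCap (E : Finset (V × V)) (c : V × V → ℝ) (T : Finset V) (lam : ℝ)
    (B : Finset V) : ℝ :=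
  cutCap E c B + lam * ((T \ B).card : ℝ)

/-- if `(A, B ∪ {t*})` is a minimum `(r,t*)`-cut in the `(λ,T)`-flow
network, then every terminal `t ∈ T ∩ A` has `(r,t)`-edge-connectivity at least `λ`:
every edge cut separating `r` from `t` in `G` has capacity at least `λ`. -/
theorem stmt_0 (E : Finset (V × V)) (c : V × V → ℝ) (hc : ∀ e, 0 ≤ c e)
    (r : V) (T : Finset V) (hT : r ∉ T) (lam : ℝ) (hlam : 0 < lam)
    (B : Finset V) (hB : r ∉ B)
    (hmin : ∀ B' : Finset V, r ∉ B' →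
      netCutCap E c T lam B ≤ netCutCap E c T lam B') :
    ∀ t ∈ T, t ∉ B →
      ∀ U : Finset V, t ∈ U → r ∉ U → lam ≤ cutCap E c U := by
  intro t ht htB U htU hrU
  -- subadditivity of the cut capacity
  have hsub : cutCap E c (B ∪ U) ≤ cutCap E c B + cutCap E c U := by
    have h1 : inCut E (B ∪ U) ⊆ inCut E B ∪ inCut E U := by
      intro e he
      simp only [inCut, mem_filter, mem_union, not_or] at he ⊢
      tauto
    have h2 : cutCap E c (B ∪ U) ≤ ∑ e ∈ inCut E B ∪ inCut E U, c e :=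
      Finset.sum_le_sum_of_subset_of_nonneg h1 (fun e _ _ => hc e)
    have h3 : ∑ e ∈ inCut E B ∪ inCut E U, c e ≤ cutCap E c B + cutCap E c U := by
      have := Finset.sum_union_inter (s₁ := inCut E B) (s₂ := inCut E U) (f := c)
      have hnn : 0 ≤ ∑ e ∈ inCut E B ∩ inCut E U, c e :=
        Finset.sum_nonneg (fun e _ => hc e)
      unfold cutCap
      linarith
    linarith
  -- the number of terminals outside drops by at least one
  have hcard : (T \ (B ∪ U)).card + 1 ≤ (T \ B).card := by
    have hsubset : insert t (T \ (B ∪ U)) ⊆ T \ B := by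
      intro x hx
      rcases Finset.mem_insert.mp hx with rfl | hx
      · exact Finset.mem_sdiff.mpr ⟨ht, htB⟩
      · rcases Finset.mem_sdiff.mp hx with ⟨hxT, hxBU⟩
        exact Finset.mem_sdiff.mpr ⟨hxT, fun hxB => hxBU (Finset.mem_union_left _ hxB)⟩
    have htni : t ∉ T \ (B ∪ U) := by
      simp [Finset.mem_sdiff, htU]
    calc (T \ (B ∪ U)).card + 1 = (insert t (T \ (B ∪ U))).card :=
          (Finset.card_insert_of_notMem htni).symm
      _ ≤ (T \ B).card := Finset.card_le_card hsubset
  have hcardR : ((T \ (B ∪ U)).card : ℝ) + 1 ≤ ((T \ B).card : ℝ) := by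
    exact_mod_cast hcard
  have hmin' := hmin (B ∪ U) (by simp [hB, hrU])
  unfold netCutCap at hmin'
  nlinarith [hmin', hsub, hcardR, hlam.le]
end
end

section
/- Let G be a directed graph with edge capacities, root r, terminals T, parameter λ > 0, and let (A, B ∪ {t*}) be a minimum (r,t*)-cut in the (λ,T)-flow network. Then the edge cut from A to B in G is a minimum (r, T ∩ B)-cut in G, i.e., its capacity equals the minimum capacity over all edge cuts separating r from all terminals in T ∩ B. -/
open Classical Finset
noncomputable section

variable {V : Type*} [Fintype V] [DecidableEq V]

/-- if `(A, B ∪ {t*})` is a minimum `(r,t*)`-cut in the `(λ,T)`-flow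
network, then the cut of arcs from `A` to `B` in `G` (i.e. `∂⁻B`) is a minimum
`(r, T ∩ B)`-cut in `G`: its capacity is the least capacity of any cut `∂⁻B'`
with `r ∉ B'` and `T ∩ B ⊆ B'`. -/
theorem stmt_1 (E : Finset (V × V)) (c : V × V → ℝ) (hc : ∀ e, 0 ≤ c e)
    (r : V) (T : Finset V) (hT : r ∉ T) (lam : ℝ) (hlam : 0 < lam)
    (B : Finset V) (hB : r ∉ B)
    (hmin : ∀ B' : Finset V, r ∉ B' →
      netCutCap E c T lam B ≤ netCutCap E c T lam B') :
    IsLeast {x : ℝ | ∃ B' : Finset V, r ∉ B' ∧ T ∩ B ⊆ B' ∧ x = cutCap E c B'}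
      (cutCap E c B) := by
  constructor
  · exact ⟨B, hB, inter_subset_right, rfl⟩
  · rintro x ⟨B', hB', hsub, rfl⟩
    have h := hmin B' hB'
    have hss : T \ B' ⊆ T \ B := by
      intro t ht
      simp only [mem_sdiff] at ht ⊢
      refine ⟨ht.1, fun htB => ht.2 (hsub ?_)⟩
      exact mem_inter.mpr ⟨ht.1, htB⟩
    have hcard : ((T \ B').card : ℝ) ≤ ((T \ B).card : ℝ) := by
      exact_mod_cast card_le_card hss
    have : lam * ((T \ B').card : ℝ) ≤ lam * ((T \ B).card : ℝ) :=
      mul_le_mul_of_nonneg_left hcard hlam.le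
    unfold netCutCap at h
    linarith
end
end

section
/- Let G be a directed graph with edge capacities, root r, terminals T, parameter λ > 0, and let (A, B ∪ {t*}) be a minimum (r,t*)-cut in the (λ,T)-flow network. Then for every terminal t ∈ T ∩ B there exists a minimum (r,t)-cut in G whose sink component is contained in B; that is, there exists U ⊆ B with t ∈ U, r ∉ U, such that the capacity of the set of arcs entering U equals the minimum (r,t)-cut capacity in G. -/
open Classical Finset
noncomputable section

variable {V : Type*} [Fintype V] [DecidableEq V]

lemma cutCap_submodular (E : Finset (V × V)) (c : V × V → ℝ) (hc : ∀ e, 0 ≤ c e)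
    (W B : Finset V) :
    cutCap E c (W ∩ B) + cutCap E c (W ∪ B) ≤ cutCap E c W + cutCap E c B := by
  classical
  have hrw : ∀ X : Finset V, cutCap E c X
      = ∑ e ∈ E, if e.1 ∉ X ∧ e.2 ∈ X then c e else 0 := by
    intro X; rw [cutCap, inCut, Finset.sum_filter]
  simp only [hrw, ← Finset.sum_add_distrib]
  apply Finset.sum_le_sum
  intro e _
  by_cases h1 : e.1 ∈ W <;> by_cases h2 : e.1 ∈ B <;>
    by_cases h3 : e.2 ∈ W <;> by_cases h4 : e.2 ∈ B <;>
      simp [h1, h2, h3, h4] <;> linarith [hc e]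

/-- if `(A, B ∪ {t*})` is a minimum `(r,t*)`-cut in the `(λ,T)`-flow
network, then for every terminal `t ∈ T ∩ B` there is a minimum `(r,t)`-cut of `G`
whose sink component `U` is contained in `B`: `U ⊆ B`, `t ∈ U`, `r ∉ U`, and
`c(∂⁻U)` is the least capacity of any cut `∂⁻W` with `t ∈ W`, `r ∉ W`. -/
theorem stmt_2 (E : Finset (V × V)) (c : V × V → ℝ) (hc : ∀ e, 0 ≤ c e)
    (r : V) (T : Finset V) (hT : r ∉ T) (lam : ℝ) (hlam : 0 < lam)
    (B : Finset V) (hB : r ∉ B)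
    (hmin : ∀ B' : Finset V, r ∉ B' →
      netCutCap E c T lam B ≤ netCutCap E c T lam B') :
    ∀ t ∈ T, t ∈ B →
      ∃ U : Finset V, U ⊆ B ∧ t ∈ U ∧ r ∉ U ∧
        IsLeast {x : ℝ | ∃ W : Finset V, t ∈ W ∧ r ∉ W ∧ x = cutCap E c W}
          (cutCap E c U) := by
  intro t ht htB
  have hrt : r ≠ t := fun h => hT (h ▸ ht)
  obtain ⟨W, hWmem, hWmin⟩ := Finset.exists_min_image
    (Finset.univ.filter (fun W : Finset V => t ∈ W ∧ r ∉ W)) (cutCap E c)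
    ⟨{t}, by simp [hrt]⟩
  simp only [Finset.mem_filter, Finset.mem_univ, true_and] at hWmem
  obtain ⟨htW, hrW⟩ := hWmem
  -- cutCap B ≤ cutCap (W ∪ B) from optimality of B
  have hcard : ((T \ (W ∪ B)).card : ℝ) ≤ ((T \ B).card : ℝ) := by
    exact_mod_cast Finset.card_le_card
      (Finset.sdiff_subset_sdiff (Finset.Subset.refl T) Finset.subset_union_right)
  have hnet := hmin (W ∪ B) (by simp [hrW, hB])
  have h1 : cutCap E c B ≤ cutCap E c (W ∪ B) := by
    simp only [netCutCap] at hnet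
    nlinarith
  have h2 : cutCap E c (W ∩ B) ≤ cutCap E c W := by
    have := cutCap_submodular E c hc W B
    linarith
  refine ⟨W ∩ B, Finset.inter_subset_right, Finset.mem_inter.2 ⟨htW, htB⟩,
    fun h => hB (Finset.mem_inter.1 h).2, ?_, ?_⟩
  · exact ⟨W ∩ B, Finset.mem_inter.2 ⟨htW, htB⟩,
      fun h => hB (Finset.mem_inter.1 h).2, rfl⟩
  · rintro x ⟨W', h1', h2', rfl⟩
    have := hWmin W' (Finset.mem_filter.2 ⟨Finset.mem_univ _, h1', h2'⟩)
    linarith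
end
end

section
/- Shrink lemma: suppose (G,r) is rooted φ-conditioned, and let (A, B ∪ {t*}) be a minimum (r,t*)-cut in the (λ,T)-flow network. Then vol⁻(B) ≤ λ·|T ∩ B| / φ; consequently, the contracted graph G/A has at most λ·|T ∩ B| / φ edges. -/
open Classical Finset
noncomputable section

variable {V : Type*} [Fintype V] [DecidableEq V]

/-- Unweighted in-degree of `v`. -/
def degIn (E : Finset (V × V)) (v : V) : ℕ :=
  (E.filter (fun e => e.2 = v)).card

/-- In-volume of `X`: the sum of unweighted in-degrees over `X`. -/
def volIn (E : Finset (V × V)) (X : Finset V) : ℕ :=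
  ∑ v ∈ X, degIn E v

/-- `(G,r)` is rooted `φ`-conditioned. -/
def RootedConditioned (E : Finset (V × V)) (c : V × V → ℝ) (r : V) (φ : ℝ) : Prop :=
  ∀ U : Finset V, U.Nonempty → r ∉ U → φ * (volIn E U : ℝ) ≤ cutCap E c U

/-- shrink lemma: if `(G,r)` is rooted `φ`-conditioned and
`(A, B ∪ {t*})` is a minimum `(r,t*)`-cut in the `(λ,T)`-flow network, then
`vol⁻(B) ≤ λ·|T ∩ B|/φ`; consequently the contracted graph `G/A`, which has at most
`vol⁻(B)` edges (its edges are the arcs of `G` with head in `B`), has at most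
`λ·|T ∩ B|/φ` edges. -/
theorem stmt_7 (E : Finset (V × V)) (c : V × V → ℝ) (hc : ∀ e, 0 ≤ c e)
    (r : V) (T : Finset V) (hT : r ∉ T) (lam φ : ℝ) (hlam : 0 < lam) (hφ : 0 < φ)
    (hcond : RootedConditioned E c r φ)
    (B : Finset V) (hB : r ∉ B)
    (hmin : ∀ B' : Finset V, r ∉ B' →
      netCutCap E c T lam B ≤ netCutCap E c T lam B') :
    (volIn E B : ℝ) ≤ lam * ((T ∩ B).card : ℝ) / φ ∧
      ((E.filter (fun e => e.2 ∈ B)).card : ℝ) ≤ lam * ((T ∩ B).card : ℝ) / φ := by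
  have hvol_eq : volIn E B = (E.filter (fun e => e.2 ∈ B)).card := by
    classical
    unfold volIn degIn
    simp only [Finset.card_filter]
    rw [Finset.sum_comm]
    refine Finset.sum_congr rfl fun e _ => ?_
    simp [eq_comm]
  have hmain : (volIn E B : ℝ) ≤ lam * ((T ∩ B).card : ℝ) / φ := by
    rcases B.eq_empty_or_nonempty with hBe | hBne
    · subst hBe
      simp [volIn]
    · have h1 : φ * (volIn E B : ℝ) ≤ cutCap E c B := hcond B hBne hB
      have h2 := hmin ∅ (by simp)
      have hcut0 : cutCap E c (∅ : Finset V) = 0 := by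
        simp [cutCap, inCut]
      have hsdiff : ((T \ B).card : ℝ) = (T.card : ℝ) - ((T ∩ B).card : ℝ) := by
        have := Finset.card_sdiff_add_card_inter T B
        have : (T \ B).card = T.card - (T ∩ B).card := by omega
        rw [this]
        have hle : (T ∩ B).card ≤ T.card := Finset.card_le_card (Finset.inter_subset_left)
        push_cast [Nat.cast_sub hle]
        ring
      have h3 : cutCap E c B ≤ lam * ((T ∩ B).card : ℝ) := by
        have := h2
        simp only [netCutCap, hcut0, Finset.sdiff_empty] at this
        rw [hsdiff] at this
        nlinarith
      rw [le_div_iff₀ hφ]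
      nlinarith
  refine ⟨hmain, ?_⟩
  rw [← hvol_eq]
  exact hmain
end
end

section
/- Pushing back flow preserves cut saturation: let f be a maximum (r,t*)-flow in the (λ,T)-flow network with minimum cut (A, B ∪ {t*}). The restriction of f to G is an (r, T)-preflow in which each t ∈ T ∩ A has excess λ. The flow h obtained by canceling (pushing back to r) the excess at each t ∈ T ∩ A still saturates every arc from A to B and carries zero flow on every arc from B to A; hence h is a maximum (r, T ∩ B)-flow in G of value c(A→B). -/
open Classical Finset
noncomputable section

variable {V : Type*} [Fintype V] [DecidableEq V]

section FlowDefs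

variable {α : Type*} [Fintype α] [DecidableEq α]

/-- Total flow of `f` into `v` along arcs of `F`. -/
def flowIn (F : Finset (α × α)) (f : α × α → ℝ) (v : α) : ℝ :=
  ∑ e ∈ F.filter (fun e => e.2 = v), f e

/-- Total flow of `f` out of `v` along arcs of `F`. -/
def flowOut (F : Finset (α × α)) (f : α × α → ℝ) (v : α) : ℝ :=
  ∑ e ∈ F.filter (fun e => e.1 = v), f e

/-- Excess of `f` at `v`: inflow minus outflow. -/
def excess (F : Finset (α × α)) (f : α × α → ℝ) (v : α) : ℝ :=
  flowIn F f v - flowOut F f v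

/-- `f` respects capacities `cc` and is supported on `F`. -/
def Feasible (F : Finset (α × α)) (cc : α × α → ℝ) (f : α × α → ℝ) : Prop :=
  (∀ e ∈ F, 0 ≤ f e ∧ f e ≤ cc e) ∧ ∀ e ∉ F, f e = 0

/-- An `(s, S)`-preflow: feasible, with nonnegative excess at every non-source vertex. -/
def IsPreflow (F : Finset (α × α)) (cc : α × α → ℝ) (s : α) (f : α × α → ℝ) : Prop :=
  Feasible F cc f ∧ ∀ v, v ≠ s → 0 ≤ excess F f v

/-- A flow from source `s` to the set of sinks `S`: feasible, flow conservation at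
every vertex other than `s` and the sinks, and nonnegative excess at each sink. -/
def IsFlow (F : Finset (α × α)) (cc : α × α → ℝ) (s : α) (S : Finset α)
    (f : α × α → ℝ) : Prop :=
  Feasible F cc f ∧ (∀ v, v ≠ s → v ∉ S → excess F f v = 0) ∧
    ∀ v ∈ S, 0 ≤ excess F f v

/-- The value of a flow with source `s`: net flow out of `s`. -/
def flowValue (F : Finset (α × α)) (f : α × α → ℝ) (s : α) : ℝ :=
  flowOut F f s - flowIn F f s

end FlowDefs

set_option linter.unusedSectionVars false
section AuxLemmas
variable {α : Type*} [Fintype α] [DecidableEq α]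
lemma sum_flowIn (F : Finset (α × α)) (f : α × α → ℝ) (A : Finset α) :
    ∑ v ∈ A, flowIn F f v = ∑ e ∈ F.filter (fun e => e.2 ∈ A), f e := by
  unfold flowIn
  simp only [Finset.sum_filter]
  rw [Finset.sum_comm]
  refine Finset.sum_congr rfl fun e _ => ?_
  rw [Finset.sum_ite_eq A e.2 (fun _ => f e)]

lemma sum_flowOut (F : Finset (α × α)) (f : α × α → ℝ) (A : Finset α) :
    ∑ v ∈ A, flowOut F f v = ∑ e ∈ F.filter (fun e => e.1 ∈ A), f e := by
  unfold flowOut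
  simp only [Finset.sum_filter]
  rw [Finset.sum_comm]
  refine Finset.sum_congr rfl fun e _ => ?_
  rw [Finset.sum_ite_eq A e.1 (fun _ => f e)]

lemma excess_sum (F : Finset (α × α)) (f : α × α → ℝ) (A : Finset α) :
    ∑ v ∈ A, excess F f v =
      ∑ e ∈ F.filter (fun e => e.1 ∉ A ∧ e.2 ∈ A), f e -
        ∑ e ∈ F.filter (fun e => e.1 ∈ A ∧ e.2 ∉ A), f e := by
  unfold excess
  rw [Finset.sum_sub_distrib, sum_flowIn, sum_flowOut]
  rw [Finset.sum_filter, Finset.sum_filter, Finset.sum_filter, Finset.sum_filter,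
    ← Finset.sum_sub_distrib, ← Finset.sum_sub_distrib]
  refine Finset.sum_congr rfl fun e _ => ?_
  by_cases h1 : e.1 ∈ A <;> by_cases h2 : e.2 ∈ A <;> simp [h1, h2]

lemma flowValue_eq_neg_excess (F : Finset (α × α)) (f : α × α → ℝ) (s : α) :
    flowValue F f s = - excess F f s := by
  unfold flowValue excess; ring


lemma excess_addSingle (F : Finset (α × α)) (g : α × α → ℝ) (e : α × α)
    (he : e ∈ F) (t : ℝ) (x : α) :
    excess F (fun e' => g e' + if e' = e then t else 0) x
      = excess F g x + t * ((if x = e.2 then 1 else 0) - (if x = e.1 then 1 else 0)) := by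
  unfold excess flowIn flowOut
  rw [Finset.sum_add_distrib, Finset.sum_add_distrib]
  have hin : (∑ e' ∈ F.filter (fun e' => e'.2 = x), if e' = e then t else 0)
      = if x = e.2 then t else 0 := by
    rw [Finset.sum_ite_eq' (F.filter (fun e' => e'.2 = x)) e (fun _ => t)]
    by_cases h : e.2 = x <;> simp [Finset.mem_filter, he, h, eq_comm (a := x)]
  have hout : (∑ e' ∈ F.filter (fun e' => e'.1 = x), if e' = e then t else 0)
      = if x = e.1 then t else 0 := by
    rw [Finset.sum_ite_eq' (F.filter (fun e' => e'.1 = x)) e (fun _ => t)]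
    by_cases h : e.1 = x <;> simp [Finset.mem_filter, he, h, eq_comm (a := x)]
  rw [hin, hout]
  by_cases h1 : x = e.1 <;> by_cases h2 : x = e.2
  · have h3 : e.1 = e.2 := h1.symm.trans h2
    simp [h1, h2, h3]; try ring
  · have h3 : ¬ e.1 = e.2 := fun hh => h2 (h1.trans hh)
    simp [h1, h2, h3]; try ring
  · have h3 : ¬ e.2 = e.1 := fun hh => h1 (h2.trans hh)
    simp [h1, h2, h3]; try ring
  · simp [h1, h2]; try ring

/-- Augmenting along a residual walk from `s` to `v`. -/
lemma walk_augment (F : Finset (α × α)) (cc f : α × α → ℝ)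
    (hf : Feasible F cc f) (s : α) (rel : α → α → Prop)
    (Dinc Ddec : Set (α × α))
    (hrel : ∀ u w, rel u w →
      ((u, w) ∈ F ∧ f (u, w) < cc (u, w) ∧ (u, w) ∈ Dinc) ∨
      ((w, u) ∈ F ∧ 0 < f (w, u) ∧ (w, u) ∈ Ddec))
    {v : α} (hv : Relation.ReflTransGen rel s v) :
    ∀ δ > 0, ∃ ε, 0 < ε ∧ ε ≤ δ ∧ ∃ g, Feasible F cc g ∧
      (∀ e, |g e - f e| ≤ δ) ∧
      (∀ e, e ∉ Dinc → g e ≤ f e) ∧ (∀ e, e ∉ Ddec → f e ≤ g e) ∧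
      (∀ x, excess F g x = excess F f x +
        ε * ((if x = v then 1 else 0) - (if x = s then 1 else 0))) := by
  induction hv with
  | refl =>
      intro δ hδ
      exact ⟨δ, hδ, le_refl δ, f, hf, fun e => by simp [abs_nonneg, le_of_lt hδ],
        fun e _ => le_refl _, fun e _ => le_refl _, fun x => by ring⟩
  | @tail u w _ hrel2 ih =>
      intro δ hδ
      rcases hrel u w hrel2 with ⟨heF, hres, hD⟩ | ⟨heF, hres, hD⟩
      · -- forward arc e = (u, w) gets increased
        obtain ⟨ε, hε0, hεδ', g, hgfeas, hgcl, hginc, hgdec, hgex⟩ :=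
          ih (min (δ / 2) ((cc (u, w) - f (u, w)) / 2))
            (lt_min (by linarith) (by linarith))
        have hd1 : min (δ / 2) ((cc (u, w) - f (u, w)) / 2) ≤ δ / 2 := min_le_left _ _
        have hd2 : min (δ / 2) ((cc (u, w) - f (u, w)) / 2) ≤ (cc (u, w) - f (u, w)) / 2 :=
          min_le_right _ _
        have hcle := hgcl (u, w)
        rw [abs_le] at hcle
        refine ⟨ε, hε0, by linarith,
          fun e' => g e' + if e' = (u, w) then ε else 0, ⟨?_, ?_⟩, ?_, ?_, ?_, ?_⟩
        · intro e' he'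
          beta_reduce
          obtain ⟨h0, hcc⟩ := hgfeas.1 e' he'
          by_cases h : e' = (u, w)
          · rw [if_pos h, h]
            have h0' : 0 ≤ g (u, w) := (hgfeas.1 _ heF).1
            exact ⟨by linarith, by linarith⟩
          · rw [if_neg h, add_zero]; exact ⟨h0, hcc⟩
        · intro e' he'
          beta_reduce
          have h : e' ≠ (u, w) := fun hh => he' (hh ▸ heF)
          rw [if_neg h, add_zero]; exact hgfeas.2 e' he'
        · intro e'
          beta_reduce
          have hcle' := hgcl e'
          rw [abs_le] at hcle' ⊢
          by_cases h : e' = (u, w)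
          · rw [if_pos h, h]
            exact ⟨by linarith, by linarith⟩
          · rw [if_neg h, add_zero]
            exact ⟨by linarith, by linarith⟩
        · intro e' he'
          beta_reduce
          have h : e' ≠ (u, w) := fun hh => he' (hh ▸ hD)
          rw [if_neg h, add_zero]; exact hginc e' he'
        · intro e' he'
          beta_reduce
          by_cases h : e' = (u, w)
          · rw [if_pos h, h]
            have h4 := hgdec e' he'
            rw [h] at h4; linarith
          · rw [if_neg h, add_zero]; exact hgdec e' he'
        · intro x
          rw [excess_addSingle F g (u, w) heF ε x, hgex x]
          ring
      · -- backward arc e = (w, u) gets decreased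
        obtain ⟨ε, hε0, hεδ', g, hgfeas, hgcl, hginc, hgdec, hgex⟩ :=
          ih (min (δ / 2) (f (w, u) / 2)) (lt_min (by linarith) (by linarith))
        have hd1 : min (δ / 2) (f (w, u) / 2) ≤ δ / 2 := min_le_left _ _
        have hd2 : min (δ / 2) (f (w, u) / 2) ≤ f (w, u) / 2 := min_le_right _ _
        have hcle := hgcl (w, u)
        rw [abs_le] at hcle
        refine ⟨ε, hε0, by linarith,
          fun e' => g e' + if e' = (w, u) then -ε else 0, ⟨?_, ?_⟩, ?_, ?_, ?_, ?_⟩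
        · intro e' he'
          beta_reduce
          obtain ⟨h0, hcc⟩ := hgfeas.1 e' he'
          by_cases h : e' = (w, u)
          · rw [if_pos h, h]
            have hcc' : g (w, u) ≤ cc (w, u) := (hgfeas.1 _ heF).2
            exact ⟨by linarith, by linarith⟩
          · rw [if_neg h, add_zero]; exact ⟨h0, hcc⟩
        · intro e' he'
          beta_reduce
          have h : e' ≠ (w, u) := fun hh => he' (hh ▸ heF)
          rw [if_neg h, add_zero]; exact hgfeas.2 e' he'
        · intro e'
          beta_reduce
          have hcle' := hgcl e'
          rw [abs_le] at hcle' ⊢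
          by_cases h : e' = (w, u)
          · rw [if_pos h, h]
            exact ⟨by linarith, by linarith⟩
          · rw [if_neg h, add_zero]
            exact ⟨by linarith, by linarith⟩
        · intro e' he'
          beta_reduce
          by_cases h : e' = (w, u)
          · rw [if_pos h, h]
            have h4 := hginc e' he'
            rw [h] at h4; linarith
          · rw [if_neg h, add_zero]; exact hginc e' he'
        · intro e' he'
          beta_reduce
          have h : e' ≠ (w, u) := fun hh => he' (hh ▸ hD)
          rw [if_neg h, add_zero]; exact hgdec e' he'
        · intro x
          rw [excess_addSingle F g (w, u) heF (-ε) x, hgex x]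
          ring
/-- If all excesses away from `r` are nonnegative, the excess at `v ∉ B` is positive,
no flow leaves `B`, then there is a positive-flow walk from `r` to `v`, traced
backwards from `v` along arcs with positive flow and head outside `B`. -/
lemma reach_of_excess (F : Finset (α × α)) (h : α × α → ℝ)
    (hnn : ∀ e, 0 ≤ h e) (B : Finset α)
    (hB0 : ∀ e ∈ F, e.1 ∈ B → e.2 ∉ B → h e = 0)
    (r v : α) (hvB : v ∉ B) (hvex : 0 < excess F h v)
    (hexnn : ∀ x, x ≠ r → 0 ≤ excess F h x) :
    Relation.ReflTransGen (fun a b => (b, a) ∈ F ∧ 0 < h (b, a) ∧ a ∉ B) v r := by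
  classical
  set rel : α → α → Prop := fun a b => (b, a) ∈ F ∧ 0 < h (b, a) ∧ a ∉ B with hrel
  by_contra hcon
  set Z : Finset α := Finset.univ.filter (fun u => Relation.ReflTransGen rel v u) with hZ
  have hvZ : v ∈ Z := by
    simp only [hZ, Finset.mem_filter, Finset.mem_univ, true_and]
    exact Relation.ReflTransGen.refl
  have hrZ : r ∉ Z := by
    simp only [hZ, Finset.mem_filter, Finset.mem_univ, true_and]
    exact hcon
  -- every vertex of Z is outside B
  have hZB : ∀ u ∈ Z, u ∉ B := by
    intro u hu
    simp only [hZ, Finset.mem_filter, Finset.mem_univ, true_and] at hu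
    induction hu with
    | refl => exact hvB
    | @tail a b _ hab ih =>
        intro hbB
        have h0 : h (b, a) = 0 := hB0 (b, a) hab.1 hbB ih
        exact absurd h0 (ne_of_gt hab.2.1)
  -- sum of excesses over Z is positive
  have hsum : 0 < ∑ u ∈ Z, excess F h u := by
    have : ∀ u ∈ Z, 0 ≤ excess F h u := fun u hu =>
      hexnn u (fun hh => hrZ (hh ▸ hu))
    calc (0:ℝ) < excess F h v := hvex
      _ ≤ ∑ u ∈ Z, excess F h u := Finset.single_le_sum this hvZ
  rw [excess_sum] at hsum
  have hout : 0 ≤ ∑ e ∈ F.filter (fun e => e.1 ∈ Z ∧ e.2 ∉ Z), h e :=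
    Finset.sum_nonneg fun e _ => hnn e
  have hin : 0 < ∑ e ∈ F.filter (fun e => e.1 ∉ Z ∧ e.2 ∈ Z), h e := by linarith
  obtain ⟨e, he, hepos⟩ :=
    Finset.exists_lt_of_sum_lt (s := F.filter (fun e => e.1 ∉ Z ∧ e.2 ∈ Z))
      (f := fun _ => (0:ℝ)) (g := h) (by simpa using hin)
  rw [Finset.mem_filter] at he
  obtain ⟨heF, he1, he2⟩ := he
  -- e.2 ∈ Z, so e.2 ∉ B, so rel e.2 e.1 holds, so e.1 ∈ Z: contradiction
  have h2B : e.2 ∉ B := hZB e.2 he2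
  have hrel21 : rel e.2 e.1 := ⟨by simpa using heF, by simpa using hepos, h2B⟩
  apply he1
  simp only [hZ, Finset.mem_filter, Finset.mem_univ, true_and] at he2 ⊢
  exact he2.tail hrel21
end AuxLemmas
/-- The arc set of the `(λ,T)`-flow network: the arcs of `G` together with an arc
`(t, t*)` for each terminal `t ∈ T`, where the super-sink `t*` is `none : Option V`. -/
def netE (E : Finset (V × V)) (T : Finset V) : Finset (Option V × Option V) :=
  E.image (fun e => ((some e.1 : Option V), (some e.2 : Option V))) ∪
    T.image (fun t => ((some t : Option V), (none : Option V)))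

/-- Capacities in the `(λ,T)`-flow network: arcs of `G` keep their capacity, and each
auxiliary arc `(t, t*)` has capacity `lam`. -/
def netCap (c : V × V → ℝ) (lam : ℝ) : Option V × Option V → ℝ
  | (some u, some v) => c (u, v)
  | (some _, none) => lam
  | _ => 0
section NetLemmas

variable {V : Type*} [Fintype V] [DecidableEq V]

lemma netE_disj (E : Finset (V × V)) (T : Finset V) :
    Disjoint (E.image (fun e => ((some e.1 : Option V), (some e.2 : Option V))))
      (T.image (fun t => ((some t : Option V), (none : Option V)))) := by
  rw [Finset.disjoint_left]
  rintro ⟨a, b⟩ ha hb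
  simp only [Finset.mem_image, Prod.mk.injEq] at ha hb
  obtain ⟨e, _, _, hb'⟩ := ha
  obtain ⟨t, _, _, hn⟩ := hb
  rw [← hb'] at hn
  cases hn

lemma sum_netE (E : Finset (V × V)) (T : Finset V)
    (φ : Option V × Option V → ℝ) (P : Option V × Option V → Prop) [DecidablePred P] :
    ∑ e ∈ (netE E T).filter P, φ e
      = (∑ e ∈ E.filter (fun e => P (some e.1, some e.2)), φ (some e.1, some e.2))
        + ∑ t ∈ T.filter (fun t => P (some t, none)), φ (some t, none) := by
  unfold netE
  rw [Finset.filter_union, Finset.sum_union (Finset.disjoint_filter_filter (netE_disj E T))]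
  congr 1
  · rw [Finset.filter_image]
    rw [Finset.sum_image]
    intro a _ b _ hab
    simp only [Prod.mk.injEq, Option.some.injEq] at hab
    exact Prod.ext hab.1 hab.2
  · rw [Finset.filter_image]
    rw [Finset.sum_image]
    intro a _ b _ hab
    simp only [Prod.mk.injEq, Option.some.injEq] at hab
    exact hab.1

lemma mem_netE_some_some {E : Finset (V × V)} {T : Finset V} {a b : V} :
    ((some a : Option V), (some b : Option V)) ∈ netE E T ↔ (a, b) ∈ E := by
  unfold netE
  simp [Prod.ext_iff]

lemma mem_netE_some_none {E : Finset (V × V)} {T : Finset V} {t : V} :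
    ((some t : Option V), (none : Option V)) ∈ netE E T ↔ t ∈ T := by
  unfold netE
  simp [Prod.ext_iff]

lemma flowIn_netE (E : Finset (V × V)) (T : Finset V) (f : Option V × Option V → ℝ)
    (v : V) : flowIn (netE E T) f (some v)
      = flowIn E (fun e => f (some e.1, some e.2)) v := by
  unfold flowIn
  rw [sum_netE E T f (fun e => e.2 = some v)]
  have h2 : T.filter (fun t => ((some t : Option V), (none : Option V)).2 = some v) = ∅ := by
    apply Finset.filter_false_of_mem
    intro t _
    simp
  rw [h2, Finset.sum_empty, add_zero]
  apply Finset.sum_congr _ (fun _ _ => rfl)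
  apply Finset.filter_congr
  intro e _
  simp

lemma flowOut_netE (E : Finset (V × V)) (T : Finset V) (f : Option V × Option V → ℝ)
    (v : V) : flowOut (netE E T) f (some v)
      = flowOut E (fun e => f (some e.1, some e.2)) v
        + (if v ∈ T then f (some v, none) else 0) := by
  unfold flowOut
  rw [sum_netE E T f (fun e => e.1 = some v)]
  congr 1
  · apply Finset.sum_congr _ (fun _ _ => rfl)
    apply Finset.filter_congr
    intro e _
    simp
  · have : T.filter (fun t => ((some t : Option V), (none : Option V)).1 = some v)
        = T.filter (fun t => t = v) := by
      apply Finset.filter_congr; intro t _; simp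
    rw [this, Finset.filter_eq']
    by_cases h : v ∈ T <;> simp [h]

lemma excess_netE (E : Finset (V × V)) (T : Finset V) (f : Option V × Option V → ℝ)
    (v : V) : excess E (fun e => f (some e.1, some e.2)) v
      = excess (netE E T) f (some v) + (if v ∈ T then f (some v, none) else 0) := by
  unfold excess
  rw [flowIn_netE, flowOut_netE]
  ring

/-- Correspondence between cuts in the network and cuts in `G`. -/
lemma netCut_corr (E : Finset (V × V)) (c : V × V → ℝ) (T : Finset V) (lam : ℝ)
    (B' : Finset V) :
    ∑ e ∈ (netE E T).filter
        (fun e => e.1 ∉ insert (none : Option V) (B'.image some)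
          ∧ e.2 ∈ insert (none : Option V) (B'.image some)), netCap c lam e
      = netCutCap E c T lam B' := by
  rw [sum_netE]
  have hmemS : ∀ a : V, (some a : Option V) ∈ insert (none : Option V) (B'.image some) ↔ a ∈ B' := by
    intro a; simp
  unfold netCutCap cutCap inCut
  congr 1
  · apply Finset.sum_congr
    · apply Finset.filter_congr
      intro e _
      simp [hmemS]
    · intro e _
      rfl
  · have : T.filter (fun t => (some t : Option V) ∉ insert (none : Option V) (B'.image some)
        ∧ (none : Option V) ∈ insert (none : Option V) (B'.image some))
        = T.filter (fun t => t ∉ B') := by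
      apply Finset.filter_congr
      intro t _
      rw [hmemS]
      simp
    rw [this]
    have : ∀ t ∈ T.filter (fun t => t ∉ B'), netCap c lam ((some t : Option V), none) = lam :=
      fun t _ => rfl
    rw [Finset.sum_congr rfl this, Finset.sum_const, ← Finset.sdiff_eq_filter]
    rw [nsmul_eq_mul, mul_comm]

end NetLemmas
section ClosedHelpers

lemma isClosed_setOf_forall' {X : Type*} {ι : Sort*} [TopologicalSpace X] {P : ι → X → Prop}
    (h : ∀ i, IsClosed {x | P i x}) : IsClosed {x : X | ∀ i, P i x} := by
  rw [Set.setOf_forall]; exact isClosed_iInter h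

lemma isClosed_setOf_imp {X : Type*} [TopologicalSpace X] {A : Prop} {P : X → Prop}
    (h : IsClosed {x | P x}) : IsClosed {x : X | A → P x} := by
  by_cases hA : A
  · have he : {x : X | A → P x} = {x | P x} := by ext x; simp [hA]
    rw [he]; exact h
  · have he : {x : X | A → P x} = Set.univ := by ext x; simp [hA]
    rw [he]; exact isClosed_univ

end ClosedHelpers
/-- let `f` be a maximum `(r,t*)`-flow in the `(λ,T)`-flow network with
minimum `(r,t*)`-cut `(A, B ∪ {t*})`.  Then the restriction `fG` of `f` to `G` is an
`(r,T)`-preflow in which each saturated terminal `t ∈ T ∩ A` has excess `λ`; and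
there is a flow `h` (obtained by pushing the excess at each `t ∈ T ∩ A` back to `r`)
that saturates every arc from `A` to `B`, carries zero flow on every arc from `B` to
`A`, and hence is a maximum `(r, T ∩ B)`-flow in `G` of value `c(A→B)`. -/
theorem stmt_9 (E : Finset (V × V)) (c : V × V → ℝ) (hc : ∀ e, 0 ≤ c e)
    (r : V) (T : Finset V) (hT : r ∉ T) (lam : ℝ) (hlam : 0 < lam)
    (B : Finset V) (hB : r ∉ B)
    (hmin : ∀ B' : Finset V, r ∉ B' →
      netCutCap E c T lam B ≤ netCutCap E c T lam B')
    (f : Option V × Option V → ℝ)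
    (hf : IsFlow (netE E T) (netCap c lam) (some r) {none} f)
    (hfmax : ∀ f', IsFlow (netE E T) (netCap c lam) (some r) {none} f' →
      flowValue (netE E T) f' (some r) ≤ flowValue (netE E T) f (some r)) :
    -- the restriction of f to G is an (r,T)-preflow with excess λ at each t ∈ T ∩ A
    (IsPreflow E c r (fun e => f (some e.1, some e.2)) ∧
      ∀ t ∈ T, t ∉ B → excess E (fun e => f (some e.1, some e.2)) t = lam) ∧
    -- the pushed-back flow h
    (∃ h : V × V → ℝ,
      IsFlow E c r (T ∩ B) h ∧
      (∀ e ∈ E, e.1 ∉ B → e.2 ∈ B → h e = c e) ∧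
      (∀ e ∈ E, e.1 ∈ B → e.2 ∉ B → h e = 0) ∧
      flowValue E h r = cutCap E c B ∧
      ∀ h', IsFlow E c r (T ∩ B) h' → flowValue E h' r ≤ flowValue E h r) := by
  classical
  set fG : V × V → ℝ := fun e => f (some e.1, some e.2) with hfGdef
  have netCap_some : ∀ e : V × V, netCap c lam ((some e.1 : Option V), some e.2) = c e := by
    rintro ⟨a, b⟩; rfl
  have hfGfeas : Feasible E c fG := by
    constructor
    · intro e he
      have := hf.1.1 (some e.1, some e.2) (mem_netE_some_some.mpr (by simpa using he))
      rwa [netCap_some] at this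
    · intro e he
      exact hf.1.2 (some e.1, some e.2) (by rw [mem_netE_some_some]; simpa using he)
  -- conservation in the network
  have hconsN : ∀ x : Option V, x ≠ some r → x ≠ none → excess (netE E T) f x = 0 := by
    intro x hx1 hx2
    exact hf.2.1 x hx1 (by simpa using hx2)
  have hexfG0 : ∀ v, v ≠ r → excess E fG v = (if v ∈ T then f (some v, none) else 0) := by
    intro v hv
    rw [hfGdef, excess_netE E T f v, hconsN (some v) (by simpa using hv) (by simp), zero_add]
  have hfnnT : ∀ t ∈ T, 0 ≤ f (some t, none) := by
    intro t ht
    exact (hf.1.1 (some t, none) (mem_netE_some_none.mpr ht)).1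
  -- STEP 1 (max-flow min-cut): f saturates the minimum cut
  have key : (∀ e ∈ E, e.1 ∉ B → e.2 ∈ B → f (some e.1, some e.2) = c e) ∧
      (∀ t ∈ T, t ∉ B → f (some t, none) = lam) ∧
      (∀ e ∈ E, e.1 ∈ B → e.2 ∉ B → f (some e.1, some e.2) = 0) := by
    set NE := netE E T with hNE
    set nc := netCap c lam with hnc
    set resRel : Option V → Option V → Prop :=
      fun a b => ((a, b) ∈ NE ∧ f (a, b) < nc (a, b)) ∨ ((b, a) ∈ NE ∧ 0 < f (b, a))
      with hresdef
    set R : Finset (Option V) :=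
      Finset.univ.filter (fun x => Relation.ReflTransGen resRel (some r) x) with hR
    have memR : ∀ x, x ∈ R ↔ Relation.ReflTransGen resRel (some r) x := by
      intro x; simp [hR]
    have hrR : some r ∈ R := (memR _).mpr Relation.ReflTransGen.refl
    have hnoneR : (none : Option V) ∉ R := by
      intro hn
      obtain ⟨ε, hε0, hεδ, g, hgfeas, _, _, _, hgex⟩ :=
        walk_augment NE nc f hf.1 (some r) resRel Set.univ Set.univ
          (fun u w h => by
            rcases h with ⟨h1, h2⟩ | ⟨h1, h2⟩
            · exact Or.inl ⟨h1, h2, Set.mem_univ _⟩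
            · exact Or.inr ⟨h1, h2, Set.mem_univ _⟩) ((memR _).mp hn) 1 one_pos
      have hgflow : IsFlow NE nc (some r) {none} g := by
        refine ⟨hgfeas, ?_, ?_⟩
        · intro x hx1 hx2
          have h1 : x ≠ none := by simpa using hx2
          rw [hgex x, hconsN x hx1 h1, if_neg h1, if_neg hx1]; ring
        · intro x hx
          simp only [Finset.mem_singleton] at hx
          subst hx
          have h2 := hf.2.2 none (by simp)
          rw [hgex none, if_pos rfl, if_neg (by simp)]
          have h3 : excess NE f none = excess (netE E T) f none := rfl
          nlinarith [h2]
      have hval := hfmax g hgflow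
      rw [flowValue_eq_neg_excess, flowValue_eq_neg_excess, hgex (some r),
        if_neg (by simp), if_pos rfl] at hval
      have : excess NE f (some r) = excess (netE E T) f (some r) := rfl
      nlinarith [hval]
    have hRsat : ∀ ee ∈ NE, ee.1 ∈ R → ee.2 ∉ R → f ee = nc ee := by
      intro ee hee h1 h2
      rcases lt_or_eq_of_le (hf.1.1 ee hee).2 with hlt | heq
      · exfalso; apply h2
        rw [memR] at h1 ⊢
        exact h1.tail (Or.inl ⟨by simpa using hee, by simpa using hlt⟩)
      · exact heq
    have hRzero : ∀ ee ∈ NE, ee.1 ∉ R → ee.2 ∈ R → f ee = 0 := by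
      intro ee hee h1 h2
      rcases lt_or_eq_of_le (hf.1.1 ee hee).1 with hlt | heq
      · exfalso; apply h1
        rw [memR] at h2 ⊢
        exact h2.tail (Or.inr ⟨by simpa using hee, by simpa using hlt⟩)
      · exact heq.symm
    set B'' : Finset V := Finset.univ.filter (fun v => (some v : Option V) ∉ R) with hB''
    have hrB'' : r ∉ B'' := by simp [hB'', hrR]
    have memXr : ∀ x : Option V, x ∈ insert (none : Option V) (B''.image some) ↔ x ∉ R := by
      intro x
      cases x with
      | none => simp [hnoneR]
      | some a => simp [hB'']
    have hval1 : flowValue NE f (some r) = netCutCap E c T lam B'' := by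
      have hsum := excess_sum NE f R
      have hL : ∑ x ∈ R, excess NE f x = excess NE f (some r) := by
        apply Finset.sum_eq_single_of_mem _ hrR
        intro x hx hxr
        exact hconsN x hxr (fun hh => hnoneR (hh ▸ hx))
      have hin : ∑ ee ∈ NE.filter (fun ee => ee.1 ∉ R ∧ ee.2 ∈ R), f ee = 0 := by
        apply Finset.sum_eq_zero
        intro ee hee
        rw [Finset.mem_filter] at hee
        exact hRzero ee hee.1 hee.2.1 hee.2.2
      have hfil : NE.filter (fun ee => ee.1 ∈ R ∧ ee.2 ∉ R)
          = NE.filter (fun ee => ee.1 ∉ insert (none : Option V) (B''.image some)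
              ∧ ee.2 ∈ insert (none : Option V) (B''.image some)) := by
        apply Finset.filter_congr
        intro ee _
        rw [memXr, memXr, not_not]
      have hout : ∑ ee ∈ NE.filter (fun ee => ee.1 ∈ R ∧ ee.2 ∉ R), f ee
          = netCutCap E c T lam B'' := by
        rw [← netCut_corr E c T lam B'', hfil]
        apply Finset.sum_congr rfl
        intro ee hee
        rw [Finset.mem_filter, memXr, memXr, not_not] at hee
        exact hRsat ee hee.1 hee.2.1 hee.2.2
      rw [flowValue_eq_neg_excess]
      rw [hL, hin, hout] at hsum
      linarith
    have hminle := hmin B'' hrB''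
    have memXb : ∀ x : Option V, x ∈ insert (none : Option V) (B.image some)
        ↔ (x = none ∨ ∃ b ∈ B, x = some b) := by
      intro x; simp [eq_comm]
    set Ab : Finset (Option V) :=
      Finset.univ.filter (fun x => x ∉ insert (none : Option V) (B.image some)) with hAb
    have memAb : ∀ x : Option V, x ∈ Ab ↔ x ∉ insert (none : Option V) (B.image some) := by
      intro x; simp [hAb]
    have hrAb : some r ∈ Ab := by
      rw [memAb, memXb]
      push_neg
      exact ⟨by simp, fun b hb hh => hB (by injection hh with h'; rw [h']; exact hb)⟩
    have hsum2 := excess_sum NE f Ab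
    have hL2 : ∑ x ∈ Ab, excess NE f x = excess NE f (some r) := by
      apply Finset.sum_eq_single_of_mem _ hrAb
      intro x hx hxr
      apply hconsN x hxr
      intro hh
      rw [hh, memAb] at hx
      exact hx (by simp)
    have hinnn : 0 ≤ ∑ ee ∈ NE.filter (fun ee => ee.1 ∉ Ab ∧ ee.2 ∈ Ab), f ee :=
      Finset.sum_nonneg fun ee hee => (hf.1.1 ee (Finset.mem_filter.mp hee).1).1
    have hfil2 : NE.filter (fun ee => ee.1 ∈ Ab ∧ ee.2 ∉ Ab)
        = NE.filter (fun ee => ee.1 ∉ insert (none : Option V) (B.image some)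
            ∧ ee.2 ∈ insert (none : Option V) (B.image some)) := by
      apply Finset.filter_congr
      intro ee _
      rw [memAb, memAb, not_not]
    have houtle : ∑ ee ∈ NE.filter (fun ee => ee.1 ∈ Ab ∧ ee.2 ∉ Ab), f ee
        ≤ netCutCap E c T lam B := by
      rw [hfil2, ← netCut_corr E c T lam B]
      exact Finset.sum_le_sum fun ee hee => (hf.1.1 ee (Finset.mem_filter.mp hee).1).2
    have hveq : flowValue NE f (some r)
        = ∑ ee ∈ NE.filter (fun ee => ee.1 ∈ Ab ∧ ee.2 ∉ Ab), f ee
          - ∑ ee ∈ NE.filter (fun ee => ee.1 ∉ Ab ∧ ee.2 ∈ Ab), f ee := by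
      rw [flowValue_eq_neg_excess]
      rw [hL2] at hsum2
      linarith
    have hge : netCutCap E c T lam B ≤ flowValue NE f (some r) := hval1 ▸ hminle
    have hout_eq : ∑ ee ∈ NE.filter (fun ee => ee.1 ∈ Ab ∧ ee.2 ∉ Ab), f ee
        = netCutCap E c T lam B := le_antisymm houtle (by linarith)
    have hin_eq : ∑ ee ∈ NE.filter (fun ee => ee.1 ∉ Ab ∧ ee.2 ∈ Ab), f ee = 0 :=
      le_antisymm (by linarith) hinnn
    have hterm : ∀ ee ∈ NE.filter (fun ee => ee.1 ∉ insert (none : Option V) (B.image some)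
        ∧ ee.2 ∈ insert (none : Option V) (B.image some)), f ee = nc ee := by
      rw [hfil2, ← netCut_corr E c T lam B] at hout_eq
      exact (Finset.sum_eq_sum_iff_of_le
        (fun ee hee => (hf.1.1 ee (Finset.mem_filter.mp hee).1).2)).mp hout_eq
    have hterm0 : ∀ ee ∈ NE.filter (fun ee => ee.1 ∉ Ab ∧ ee.2 ∈ Ab), f ee = 0 := by
      rw [Finset.sum_eq_zero_iff_of_nonneg
        (fun ee hee => (hf.1.1 ee (Finset.mem_filter.mp hee).1).1)] at hin_eq
      exact hin_eq
    refine ⟨?_, ?_, ?_⟩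
    · intro e he h1 h2
      have hm : ((some e.1 : Option V), (some e.2 : Option V))
          ∈ NE.filter (fun ee => ee.1 ∉ insert (none : Option V) (B.image some)
            ∧ ee.2 ∈ insert (none : Option V) (B.image some)) := by
        rw [Finset.mem_filter]
        refine ⟨mem_netE_some_some.mpr (by simpa using he), ?_, ?_⟩
        · rw [memXb]; push_neg
          exact ⟨by simp, fun b hb hh => h1 (by injection hh with h'; rw [h']; exact hb)⟩
        · rw [memXb]; exact Or.inr ⟨e.2, h2, rfl⟩
      have := hterm _ hm
      rwa [netCap_some] at this
    · intro t ht htB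
      have hm : ((some t : Option V), (none : Option V))
          ∈ NE.filter (fun ee => ee.1 ∉ insert (none : Option V) (B.image some)
            ∧ ee.2 ∈ insert (none : Option V) (B.image some)) := by
        rw [Finset.mem_filter]
        refine ⟨mem_netE_some_none.mpr ht, ?_, by simp⟩
        rw [memXb]; push_neg
        exact ⟨by simp, fun b hb hh => htB (by injection hh with h'; rw [h']; exact hb)⟩
      exact hterm _ hm
    · intro e he h1 h2
      have hm : ((some e.1 : Option V), (some e.2 : Option V))
          ∈ NE.filter (fun ee => ee.1 ∉ Ab ∧ ee.2 ∈ Ab) := by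
        rw [Finset.mem_filter, memAb, memAb, not_not]
        refine ⟨mem_netE_some_some.mpr (by simpa using he), ?_, ?_⟩
        · rw [memXb]; exact Or.inr ⟨e.1, h1, rfl⟩
        · rw [memXb]; push_neg
          exact ⟨by simp, fun b hb hh => h2 (by injection hh with h'; rw [h']; exact hb)⟩
      exact hterm0 _ hm

  obtain ⟨hsatF, hsatT, hrevF⟩ := key
  -- STEP 2: preflow part
  have hpre : IsPreflow E c r fG ∧ ∀ t ∈ T, t ∉ B → excess E fG t = lam := by
    constructor
    · refine ⟨hfGfeas, fun v hv => ?_⟩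
      rw [hexfG0 v hv]
      by_cases h : v ∈ T
      · simpa [h] using hfnnT v h
      · simp [h]
    · intro t ht htB
      have htr : t ≠ r := fun hh => hT (hh ▸ ht)
      rw [hexfG0 t htr, if_pos ht, hsatT t ht htB]
  -- STEP 3: pushing back the excess
  have hmain : ∃ h : V × V → ℝ,
      IsFlow E c r (T ∩ B) h ∧
      (∀ e ∈ E, e.1 ∉ B → e.2 ∈ B → h e = c e) ∧
      (∀ e ∈ E, e.1 ∈ B → e.2 ∉ B → h e = 0) ∧
      flowValue E h r = cutCap E c B ∧
      ∀ h', IsFlow E c r (T ∩ B) h' → flowValue E h' r ≤ flowValue E h r := by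
    set K : Finset V := T ∩ B with hK
    set Vbad : Finset V := Finset.univ \ insert r K with hVbadDef
    have memVbad : ∀ v, v ∈ Vbad ↔ (v ≠ r ∧ v ∉ K) := by
      intro v; simp [hVbadDef, not_or]
    have hcont_ex : ∀ v : V, Continuous (fun h : (V × V) → ℝ => excess E h v) := by
      intro v
      unfold excess flowIn flowOut
      exact ((continuous_finset_sum _ (fun e _ => continuous_apply e)).sub
        (continuous_finset_sum _ (fun e _ => continuous_apply e)))
    set S : Set ((V × V) → ℝ) := {h | (∀ e ∈ E, 0 ≤ h e ∧ h e ≤ c e) ∧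
      (∀ e, e ∉ E → h e = 0) ∧
      (∀ v, v ≠ r → 0 ≤ excess E h v) ∧
      (∀ v, v ≠ r → excess E h v ≤ excess E fG v) ∧
      (∀ e ∈ E, e.1 ∉ B → e.2 ∈ B → h e = c e) ∧
      (∀ e ∈ E, e.1 ∈ B → e.2 ∉ B → h e = 0)} with hSdef
    have hfGS : fG ∈ S := by
      refine ⟨hfGfeas.1, fun e he => hfGfeas.2 e he, ?_, fun v _ => le_refl _, hsatF, hrevF⟩
      intro v hv
      rw [hexfG0 v hv]
      by_cases h : v ∈ T
      · simpa [h] using hfnnT v h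
      · simp [h]
    have hSclosed : IsClosed S := by
      rw [hSdef]
      have c1 : IsClosed {h : (V × V) → ℝ | ∀ e ∈ E, 0 ≤ h e ∧ h e ≤ c e} :=
        isClosed_setOf_forall' fun e => isClosed_setOf_imp
          (by
            have he : {h : (V × V) → ℝ | 0 ≤ h e ∧ h e ≤ c e}
                = {h : (V × V) → ℝ | 0 ≤ h e} ∩ {h | h e ≤ c e} := rfl
            rw [he]
            exact (isClosed_le continuous_const (continuous_apply e)).inter
              (isClosed_le (continuous_apply e) continuous_const))
      have c2 : IsClosed {h : (V × V) → ℝ | ∀ e, e ∉ E → h e = 0} :=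
        isClosed_setOf_forall' fun e => isClosed_setOf_imp
          (isClosed_eq (continuous_apply e) continuous_const)
      have c3 : IsClosed {h : (V × V) → ℝ | ∀ v, v ≠ r → 0 ≤ excess E h v} :=
        isClosed_setOf_forall' fun v => isClosed_setOf_imp
          (isClosed_le continuous_const (hcont_ex v))
      have c4 : IsClosed {h : (V × V) → ℝ | ∀ v, v ≠ r → excess E h v ≤ excess E fG v} :=
        isClosed_setOf_forall' fun v => isClosed_setOf_imp
          (isClosed_le (hcont_ex v) continuous_const)
      have c5 : IsClosed {h : (V × V) → ℝ | ∀ e ∈ E, e.1 ∉ B → e.2 ∈ B → h e = c e} :=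
        isClosed_setOf_forall' fun e => isClosed_setOf_imp (isClosed_setOf_imp
          (isClosed_setOf_imp (isClosed_eq (continuous_apply e) continuous_const)))
      have c6 : IsClosed {h : (V × V) → ℝ | ∀ e ∈ E, e.1 ∈ B → e.2 ∉ B → h e = 0} :=
        isClosed_setOf_forall' fun e => isClosed_setOf_imp (isClosed_setOf_imp
          (isClosed_setOf_imp (isClosed_eq (continuous_apply e) continuous_const)))
      exact c1.inter (c2.inter (c3.inter (c4.inter (c5.inter c6))))
    have hSsub : S ⊆ Set.Icc (fun _ => (0:ℝ)) c := by
      intro h hh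
      rw [Set.mem_Icc]
      constructor
      · intro e
        by_cases he : e ∈ E
        · exact (hh.1 e he).1
        · rw [hh.2.1 e he]
      · intro e
        by_cases he : e ∈ E
        · exact (hh.1 e he).2
        · rw [hh.2.1 e he]; exact hc e
    have hScompact : IsCompact S := isCompact_Icc.of_isClosed_subset hSclosed hSsub
    obtain ⟨h0, h0S, h0min⟩ := hScompact.exists_isMinOn ⟨fG, hfGS⟩
      (continuous_finset_sum Vbad (fun v _ => hcont_ex v)).continuousOn
    have h0feas : Feasible E c h0 := ⟨h0S.1, h0S.2.1⟩
    have h0nn : ∀ e, 0 ≤ h0 e := by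
      intro e
      by_cases he : e ∈ E
      · exact (h0S.1 e he).1
      · rw [h0S.2.1 e he]
    -- the minimum has zero excess at every vertex outside {r} ∪ (T ∩ B)
    have hbad0 : ∀ v ∈ Vbad, excess E h0 v = 0 := by
      by_contra hcon
      push_neg at hcon
      obtain ⟨v, hvbad, hvne⟩ := hcon
      have hvr : v ≠ r := ((memVbad v).mp hvbad).1
      have hvK : v ∉ K := ((memVbad v).mp hvbad).2
      have hvpos : 0 < excess E h0 v := lt_of_le_of_ne (h0S.2.2.1 v hvr) (Ne.symm hvne)
      have hvB : v ∉ B := by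
        intro hvB
        have hvT : v ∉ T := fun hvT => hvK (by rw [hK]; exact Finset.mem_inter.mpr ⟨hvT, hvB⟩)
        have he1 : excess E fG v = 0 := by rw [hexfG0 v hvr, if_neg hvT]
        have he2 := h0S.2.2.2.1 v hvr
        linarith
      have hreach := reach_of_excess E h0 h0nn B h0S.2.2.2.2.2 r v hvB hvpos
        (fun x hx => h0S.2.2.1 x hx)
      obtain ⟨ε, hε0, hεδ, g, hgfeas, hgcl, hginc, hgdec, hgex⟩ :=
        walk_augment E c h0 h0feas v (fun a b => (b, a) ∈ E ∧ 0 < h0 (b, a) ∧ a ∉ B)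
          ∅ {e : V × V | e.2 ∉ B}
          (fun a b hab => Or.inr ⟨hab.1, hab.2.1, hab.2.2⟩) hreach
          (excess E h0 v) hvpos
      have hginc' : ∀ e, g e ≤ h0 e := fun e => hginc e (by simp)
      have hgS : g ∈ S := by
        refine ⟨hgfeas.1, fun e he => hgfeas.2 e he, ?_, ?_, ?_, ?_⟩
        · intro x hx
          rw [hgex x, if_neg hx]
          by_cases hxv : x = v
          · subst hxv
            rw [if_pos rfl]
            have := h0S.2.2.1 x hx
            linarith
          · rw [if_neg hxv]
            have := h0S.2.2.1 x hx
            linarith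
        · intro x hx
          rw [hgex x, if_neg hx]
          by_cases hxv : x = v
          · subst hxv
            rw [if_pos rfl]
            have := h0S.2.2.2.1 x hx
            linarith
          · rw [if_neg hxv]
            have := h0S.2.2.2.1 x hx
            linarith
        · intro e he h1 h2
          have hle1 := hginc' e
          have hle2 := hgdec e (fun hdd => hdd h2)
          have := h0S.2.2.2.2.1 e he h1 h2
          linarith
        · intro e he h1 h2
          have hle1 := hginc' e
          have := h0S.2.2.2.2.2 e he h1 h2
          have hge := (hgfeas.1 e he).1
          linarith
      have hrVbad : r ∉ Vbad := fun hmem => ((memVbad r).mp hmem).1 rfl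
      have hsum1 : ∑ x ∈ Vbad, (if x = r then (1:ℝ) else 0) = 0 := by
        rw [Finset.sum_ite_eq' Vbad r (fun _ => (1:ℝ)), if_neg hrVbad]
      have hsum2 : ∑ x ∈ Vbad, (if x = v then (1:ℝ) else 0) = 1 := by
        rw [Finset.sum_ite_eq' Vbad v (fun _ => (1:ℝ)), if_pos hvbad]
      have hΦ : ∑ x ∈ Vbad, excess E g x = (∑ x ∈ Vbad, excess E h0 x) - ε := by
        rw [Finset.sum_congr rfl (fun x (_ : x ∈ Vbad) => hgex x), Finset.sum_add_distrib,
          ← Finset.mul_sum, Finset.sum_sub_distrib, hsum1, hsum2]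
        ring
      have hminle := (isMinOn_iff.mp h0min) g hgS
      rw [hΦ] at hminle
      linarith
    -- value of h0
    set AA : Finset V := Finset.univ.filter (fun v => v ∉ B) with hAAdef
    have memAA : ∀ v, v ∈ AA ↔ v ∉ B := by intro v; simp [hAAdef]
    have hrAA : r ∈ AA := (memAA r).mpr hB
    have hfil : E.filter (fun e => e.1 ∈ AA ∧ e.2 ∉ AA) = inCut E B := by
      unfold inCut
      apply Finset.filter_congr
      intro e _
      rw [memAA, memAA, not_not]
    have hfilin : E.filter (fun e => e.1 ∉ AA ∧ e.2 ∈ AA)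
        = E.filter (fun e => e.1 ∈ B ∧ e.2 ∉ B) := by
      apply Finset.filter_congr
      intro e _
      rw [memAA, memAA, not_not]
    have hval0 : flowValue E h0 r = cutCap E c B := by
      have hsum := excess_sum E h0 AA
      have hL : ∑ v ∈ AA, excess E h0 v = excess E h0 r := by
        apply Finset.sum_eq_single_of_mem _ hrAA
        intro v hv hvr
        exact hbad0 v ((memVbad v).mpr ⟨hvr,
          fun hvK => ((memAA v).mp hv) (by rw [hK] at hvK; exact (Finset.mem_inter.mp hvK).2)⟩)
      have hin : ∑ e ∈ E.filter (fun e => e.1 ∉ AA ∧ e.2 ∈ AA), h0 e = 0 := by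
        rw [hfilin]
        apply Finset.sum_eq_zero
        intro e he
        rw [Finset.mem_filter] at he
        exact h0S.2.2.2.2.2 e he.1 he.2.1 he.2.2
      have hout : ∑ e ∈ E.filter (fun e => e.1 ∈ AA ∧ e.2 ∉ AA), h0 e = cutCap E c B := by
        rw [hfil]
        unfold cutCap
        apply Finset.sum_congr rfl
        intro e he
        unfold inCut at he
        rw [Finset.mem_filter] at he
        exact h0S.2.2.2.2.1 e he.1 he.2.1 he.2.2
      rw [flowValue_eq_neg_excess]
      rw [hL, hin, hout] at hsum
      linarith
    refine ⟨h0, ⟨h0feas, ?_, ?_⟩, h0S.2.2.2.2.1, h0S.2.2.2.2.2, hval0, ?_⟩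
    · intro v hv1 hv2
      exact hbad0 v ((memVbad v).mpr ⟨hv1, fun hvK => hv2 (hK ▸ hvK)⟩)
    · intro v hv
      have hvr : v ≠ r := by
        intro hh
        subst hh
        exact hT (Finset.mem_inter.mp hv).1
      exact h0S.2.2.1 v hvr
    · intro h' hh'
      have hsum := excess_sum E h' AA
      have hL : ∑ v ∈ AA, excess E h' v = excess E h' r := by
        apply Finset.sum_eq_single_of_mem _ hrAA
        intro v hv hvr
        apply hh'.2.1 v hvr
        intro hvK
        exact ((memAA v).mp hv) (Finset.mem_inter.mp hvK).2
      have hin : 0 ≤ ∑ e ∈ E.filter (fun e => e.1 ∉ AA ∧ e.2 ∈ AA), h' e :=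
        Finset.sum_nonneg fun e he => (hh'.1.1 e (Finset.mem_filter.mp he).1).1
      have hout : ∑ e ∈ E.filter (fun e => e.1 ∈ AA ∧ e.2 ∉ AA), h' e ≤ cutCap E c B := by
        rw [hfil]
        unfold cutCap
        apply Finset.sum_le_sum
        intro e he
        unfold inCut at he
        exact (hh'.1.1 e (Finset.mem_filter.mp he).1).2
      rw [flowValue_eq_neg_excess, hval0]
      rw [hL] at hsum
      linarith

  exact ⟨hpre, hmain⟩
end
end

section
/- Correspondence between vertex cuts and finite edge cuts in the split graph: let G be a directed graph with vertex capacities c : V → ℝ≥0, and let H be the split graph where each vertex v becomes an arc (v_in, v_out) of capacity c(v) and each arc (u,v) becomes (u_out, v_in) of capacity ∞. Then for r, t ∈ V with t not an out-neighbor of r, every finite-capacity (r_out, t_in)-edge cut in H has capacity at least the minimum (r,t)-vertex cut capacity in G, and the minimum (r_out,t_in)-edge cut capacity in H equals the minimum (r,t)-vertex cut capacity in G. -/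
open Classical Finset
noncomputable section

variable {V : Type*} [Fintype V] [DecidableEq V]

/-- One step of a directed walk avoiding the vertex set `X`. -/
def stepOutside (E : Finset (V × V)) (X : Finset V) (a b : V) : Prop :=
  (a, b) ∈ E ∧ a ∉ X ∧ b ∉ X

/-- `X` is an `(r,t)`-vertex cut: `X ⊆ V \ {r,t}` and removing `X` leaves no
directed path from `r` to `t`. -/
def IsVertexCut (E : Finset (V × V)) (r t : V) (X : Finset V) : Prop :=
  r ∉ X ∧ t ∉ X ∧ ¬ Relation.ReflTransGen (stepOutside E X) r t

/-- Capacity of a vertex set. -/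
def vcap (c : V → ℝ) (X : Finset V) : ℝ := ∑ v ∈ X, c v

/-- In the split graph `H` (vertices `v_in = Sum.inl v` and `v_out = Sum.inr v`,
split arcs `(v_in, v_out)` of capacity `c v`, and arcs `(u_out, v_in)` of infinite
capacity for `(u,v) ∈ E`), a sink component `Z` induces the edge cut of arcs of `H`
entering `Z`.  The cut has finite capacity iff no infinite arc `(u_out, v_in)`
enters `Z`. -/
def FiniteSplitCut (E : Finset (V × V)) (r t : V) (Z : Finset (V ⊕ V)) : Prop :=
  Sum.inl t ∈ Z ∧ Sum.inr r ∉ Z ∧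
    ∀ e ∈ E, ¬ (Sum.inr e.1 ∉ Z ∧ Sum.inl e.2 ∈ Z)

/-- The capacity of the edge cut in `H` induced by sink component `Z`, when no
infinite arc crosses: the sum of `c v` over split arcs `(v_in, v_out)` entering `Z`. -/
def splitCutCap (c : V → ℝ) (Z : Finset (V ⊕ V)) : ℝ :=
  ∑ v ∈ Finset.univ.filter (fun v : V => Sum.inl v ∉ Z ∧ Sum.inr v ∈ Z), c v

/-- correspondence between vertex cuts of `G` and finite edge cuts of
the split graph `H`.  Let `X` be a minimum `(r,t)`-vertex cut of `G`, where `t` is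
neither `r` nor an out-neighbor of `r`.  Then every finite-capacity
`(r_out, t_in)`-edge cut of `H` has capacity at least `vcap c X`, and the minimum
`(r_out, t_in)`-edge cut capacity of `H` equals `vcap c X`. -/
theorem stmt_12 (E : Finset (V × V)) (c : V → ℝ) (hc : ∀ v, 0 ≤ c v)
    (r t : V) (hrt : r ≠ t) (hout : (r, t) ∉ E)
    (X : Finset V) (hX : IsVertexCut E r t X)
    (hXmin : ∀ X' : Finset V, IsVertexCut E r t X' → vcap c X ≤ vcap c X') :
    (∀ Z : Finset (V ⊕ V), FiniteSplitCut E r t Z → vcap c X ≤ splitCutCap c Z) ∧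
      (∃ Z : Finset (V ⊕ V), FiniteSplitCut E r t Z ∧ splitCutCap c Z = vcap c X) := by
  classical
  have reach_notin : ∀ v, Relation.ReflTransGen (stepOutside E X) r v → v ∉ X := by
    intro v h
    induction h with
    | refl => exact hX.1
    | tail _ hstep _ => exact hstep.2.2
  have h1 : ∀ Z : Finset (V ⊕ V), FiniteSplitCut E r t Z → vcap c X ≤ splitCutCap c Z := by
    intro Z hZ
    set Y : Finset V := Finset.univ.filter (fun v : V => Sum.inl v ∉ Z ∧ Sum.inr v ∈ Z) with hYdef
    have hYmem : ∀ v, v ∈ Y ↔ (Sum.inl v ∉ Z ∧ Sum.inr v ∈ Z) := by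
      intro v; simp [hYdef]
    have hreach : ∀ v, Relation.ReflTransGen (stepOutside E Y) r v → Sum.inr v ∉ Z := by
      intro v h
      induction h with
      | refl => exact hZ.2.1
      | @tail a b _ hstep ih =>
          have hlb : Sum.inl b ∉ Z := by
            intro hb
            exact hZ.2.2 (a, b) hstep.1 ⟨ih, hb⟩
          intro hrb
          exact hstep.2.2 ((hYmem b).2 ⟨hlb, hrb⟩)
    have hYcut : IsVertexCut E r t Y := by
      refine ⟨?_, ?_, ?_⟩
      · intro hr; exact hZ.2.1 ((hYmem r).1 hr).2
      · intro ht; exact ((hYmem t).1 ht).1 hZ.1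
      · intro hpath
        rcases hpath.cases_tail with h | ⟨a, hpa, hstep⟩
        · exact hrt h.symm
        · have hra : Sum.inr a ∉ Z := hreach a hpa
          exact hZ.2.2 (a, t) hstep.1 ⟨hra, hZ.1⟩
    calc vcap c X ≤ vcap c Y := hXmin Y hYcut
      _ = splitCutCap c Z := rfl
  refine ⟨h1, ?_⟩
  set Reach : V → Prop := fun v => Relation.ReflTransGen (stepOutside E X) r v with hR
  set Z : Finset (V ⊕ V) := Finset.univ.filter (fun s : V ⊕ V =>
    Sum.elim (fun v => ¬ (Reach v ∨ ∃ u, Reach u ∧ (u, v) ∈ E)) (fun v => ¬ Reach v) s) with hZdef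
  have hinl : ∀ v, Sum.inl v ∈ Z ↔ ¬ (Reach v ∨ ∃ u, Reach u ∧ (u, v) ∈ E) := by
    intro v; simp [hZdef]
  have hinr : ∀ v, Sum.inr v ∈ Z ↔ ¬ Reach v := by
    intro v; simp [hZdef]
  have hZcut : FiniteSplitCut E r t Z := by
    refine ⟨?_, ?_, ?_⟩
    · rw [hinl]
      rintro (h | ⟨u, hu, huv⟩)
      · exact hX.2.2 h
      · exact hX.2.2 (hu.tail ⟨huv, reach_notin u hu, hX.2.1⟩)
    · rw [hinr]; exact not_not.mpr Relation.ReflTransGen.refl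
    · rintro ⟨u, v⟩ he ⟨hu, hv⟩
      rw [hinr] at hu
      rw [hinl] at hv
      exact hv (Or.inr ⟨u, not_not.mp hu, he⟩)
  refine ⟨Z, hZcut, le_antisymm ?_ (h1 Z hZcut)⟩
  have hsub : (Finset.univ.filter (fun v : V => Sum.inl v ∉ Z ∧ Sum.inr v ∈ Z)) ⊆ X := by
    intro v hv
    rw [Finset.mem_filter] at hv
    obtain ⟨-, hlv, hrv⟩ := hv
    rw [hinl, not_not] at hlv
    rw [hinr] at hrv
    rcases hlv with h | ⟨u, hu, huv⟩
    · exact absurd h hrv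
    · by_contra hvX
      exact hrv (hu.tail ⟨huv, reach_notin u hu, hvX⟩)
  exact Finset.sum_le_sum_of_subset_of_nonneg hsub (fun v _ _ => hc v)
end
end
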